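/- For every integer $r \ge 2$ there exists a constant $c_r$, depending only on $r$, such that for all integers $a \ge 1$ and $n > c_r \cdot a$, every $r$-uniform hypergraph $\mathcal{H}$ on $n$ vertices with matching number $\nu(\mathcal{H}) < a$ has at most $\binom{n}{r} - \binom{n-(a-1)}{r}$ edges, i.e., at most as many edges as the $r$-uniform hypergraph whose edges are all $r$-sets meeting a fixed set of $a-1$ vertices. -/

import Mathlib

open Finset

/-- Counting: edges of an `r`-uniform hypergraph on `V` that contain a fixed set `S`. -/
lemma count_contain {α : Type*} [DecidableEq α] (V : Finset α) (E : Finset (Finset α)) (r : ℕ)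
    (hE : ∀ e ∈ E, e ⊆ V ∧ e.card = r) (S : Finset α) (hS : S ⊆ V) :
    (E.filter (fun e => S ⊆ e)).card ≤ (V.card - S.card).choose (r - S.card) := by
  have h : (E.filter (fun e => S ⊆ e)).card ≤ ((V \ S).powersetCard (r - S.card)).card := by
    apply Finset.card_le_card_of_injOn (fun e => e \ S)
    · intro e he
      simp only [coe_filter, Set.mem_setOf_eq] at he
      obtain ⟨heE, heS⟩ := he
      simp only [mem_coe, mem_powersetCard]
      refine ⟨sdiff_subset_sdiff (hE e heE).1 (Finset.Subset.refl S), ?_⟩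
      rw [card_sdiff_of_subset heS, (hE e heE).2]
    · intro e he f hf hef
      simp only [coe_filter, Set.mem_setOf_eq] at he hf
      have h1 : e \ S ∪ S = e := sdiff_union_of_subset he.2
      have h2 : f \ S ∪ S = f := sdiff_union_of_subset hf.2
      have hef' : e \ S = f \ S := hef
      rw [← h1, ← h2, hef']
  rwa [card_powersetCard, card_sdiff_of_subset hS] at h

/-- `C(m, k+1) + t·C(m, k) ≤ C(m+t, k+1)`. -/
lemma choose_add_mul_le (m k : ℕ) : ∀ t : ℕ, m.choose (k+1) + t * m.choose k ≤ (m+t).choose (k+1)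
  | 0 => by simp
  | t+1 => by
    have h1 := choose_add_mul_le m k t
    have h2 : m.choose k ≤ (m+t).choose k := Nat.choose_le_choose k (Nat.le_add_right m t)
    have h3 : (m+t+1).choose (k+1) = (m+t).choose k + (m+t).choose (k+1) :=
      Nat.choose_succ_succ' (m+t) k
    calc m.choose (k+1) + (t+1) * m.choose k
        = (m.choose (k+1) + t * m.choose k) + m.choose k := by ring
      _ ≤ (m+t).choose (k+1) + (m+t).choose k := Nat.add_le_add h1 h2
      _ = (m+t+1).choose (k+1) := by omega

/-- The key numerical estimate. -/
lemma numeric (r t n : ℕ) (hr : 2 ≤ r) (ht : 1 ≤ t)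
    (hn : 2^r * r^3 * (t+1) < n) :
    r^2 * t^2 * ((n-2).choose (r-2)) ≤ n.choose r - (n - t).choose r := by
  set P := 2^(r-2) with hP
  set K := r^3 with hK
  set Y := P * K * t with hY
  set Z := P * K with hZ
  have hPr : 2^r = 4 * P := by
    conv_lhs => rw [show r = (r-2) + 2 by omega]
    rw [pow_add, hP]; ring
  have hX : 2^r * r^3 * (t+1) = 4*Y + 4*Z := by rw [hPr, hY, hZ, hK]; ring
  rw [hX] at hn
  have hP1 : 1 ≤ P := Nat.one_le_two_pow
  have hK8 : 8 ≤ K := by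
    rw [hK]
    calc (8:ℕ) = 2^3 := by norm_num
    _ ≤ r^3 := Nat.pow_le_pow_left hr 3
  have hYt : t ≤ Y := by
    rw [hY]; exact Nat.le_mul_of_pos_left t (by positivity)
  have hZr : r ≤ Z := by
    rw [hZ]
    calc r ≤ r^3 := Nat.le_self_pow (by norm_num) r
      _ = 1 * K := by rw [hK, one_mul]
      _ ≤ P * K := Nat.mul_le_mul_right K hP1
  -- step 1 : t * C(n-t, r-1) ≤ C(n,r) - C(n-t, r)
  have htn : t ≤ n := by omega
  have step1 : (n-t).choose r + t * ((n-t).choose (r-1)) ≤ n.choose r := by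
    have := choose_add_mul_le (n-t) (r-1) t
    rw [show (r-1)+1 = r by omega, show n - t + t = n by omega] at this
    exact this
  -- step 2 : r^2 * t * C(n-2, r-2) ≤ C(n-t, r-1)
  have step2 : r^2 * t * ((n-2).choose (r-2)) ≤ (n-t).choose (r-1) := by
    have hfac : 0 < (Nat.factorial (r-1)) := Nat.factorial_pos _
    refine Nat.le_of_mul_le_mul_left ?_ hfac
    have hRHS : (Nat.factorial (r-1)) * (n-t).choose (r-1) = (n-t).descFactorial (r-1) :=
      (Nat.descFactorial_eq_factorial_mul_choose _ _).symm
    have hfacsplit : (Nat.factorial (r-1)) = (r-1) * (Nat.factorial (r-2)) := by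
      rw [show r - 1 = (r-2) + 1 by omega, Nat.factorial_succ]
    have hLHS : (Nat.factorial (r-1)) * (r^2 * t * ((n-2).choose (r-2)))
        = (r-1) * (r^2 * t) * ((n-2).descFactorial (r-2)) := by
      rw [hfacsplit, Nat.descFactorial_eq_factorial_mul_choose]; ring
    rw [hRHS, hLHS]
    set B : ℕ := n - t + 1 - (r-2) with hB
    set A : ℕ := n - t - (r-2) with hA
    have hdesc : (n-t).descFactorial (r-1) = A * ((n-t).descFactorial (r-2)) := by
      rw [show r - 1 = (r-2)+1 by omega, Nat.descFactorial_succ]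
    have hlow : B^(r-2) ≤ (n-t).descFactorial (r-2) := by
      have := Nat.pow_sub_le_descFactorial (n-t) (r-2)
      rwa [hB]
    have hn2B : n ≤ 2 * B := by rw [hB]; omega
    have hYA : Y ≤ A := by rw [hA]; omega
    calc (r-1) * (r^2 * t) * ((n-2).descFactorial (r-2))
        ≤ K * t * ((n-2).descFactorial (r-2)) := by
          apply Nat.mul_le_mul_right
          rw [hK]
          calc (r-1) * (r^2 * t) ≤ r * (r^2 * t) :=
                Nat.mul_le_mul_right _ (Nat.sub_le r 1)
            _ = r^3 * t := by ring
      _ ≤ K * t * ((n-2)^(r-2)) :=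
          Nat.mul_le_mul_left _ (Nat.descFactorial_le_pow _ _)
      _ ≤ K * t * ((2*B)^(r-2)) := by
          apply Nat.mul_le_mul_left
          exact Nat.pow_le_pow_left (le_trans (Nat.sub_le n 2) hn2B) _
      _ = Y * B^(r-2) := by rw [mul_pow]; simp only [hY, hZ, hP, hK]; ring
      _ ≤ A * B^(r-2) := Nat.mul_le_mul_right _ hYA
      _ ≤ A * ((n-t).descFactorial (r-2)) := Nat.mul_le_mul_left _ hlow
      _ = (n-t).descFactorial (r-1) := hdesc.symm
  -- combine
  have hmain : r^2 * t^2 * ((n-2).choose (r-2)) ≤ t * ((n-t).choose (r-1)) := by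
    calc r^2 * t^2 * ((n-2).choose (r-2)) = t * (r^2 * t * ((n-2).choose (r-2))) := by ring
      _ ≤ t * ((n-t).choose (r-1)) := Nat.mul_le_mul_left t step2
  have step1' : t * ((n-t).choose (r-1)) + (n-t).choose r ≤ n.choose r := by linarith [step1]
  exact le_trans hmain (Nat.le_sub_of_add_le step1')

/-- The main induction: an `r`-uniform hypergraph on vertex set `V` with no matching of
size `s+1` and `|V|` large has at most `C(|V|,r) - C(|V|-s,r)` edges. -/
lemma key_lemma (r : ℕ) (hr : 2 ≤ r) : ∀ (s : ℕ) {α : Type} [DecidableEq α]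
    (V : Finset α) (E : Finset (Finset α)),
    (∀ e ∈ E, e ⊆ V ∧ e.card = r) →
    (∀ M ⊆ E, (∀ e₁ ∈ M, ∀ e₂ ∈ M, e₁ ≠ e₂ → Disjoint e₁ e₂) → M.card ≤ s) →
    2^r * r^3 * (s+1) < V.card →
    E.card ≤ (V.card).choose r - (V.card - s).choose r := by
  intro s
  induction s with
  | zero =>
    intro α _ V E hE hM hn
    have hE0 : E = ∅ := by
      by_contra h
      obtain ⟨e, he⟩ := Finset.nonempty_iff_ne_empty.mpr h
      have := hM {e} (Finset.singleton_subset_iff.mpr he)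
        (by intro e₁ h₁ e₂ h₂ hne; simp at h₁ h₂; exact absurd (h₁.trans h₂.symm) hne)
      simp at this
    simp [hE0]
  | succ s ih =>
    intro α _ V E hE hM hn
    classical
    set n := V.card with hnV
    set c := 2^r * r^3 with hc
    have hc1 : 1 ≤ c := by
      have : 0 < 2^r * r^3 := by positivity
      omega
    set D := r * (s+1) * ((n-2).choose (r-2)) with hD
    have pair_bound : ∀ v ∈ V, ∀ u ∈ V, v ≠ u →
        ((E.filter (fun e => v ∈ e)).filter (fun e => u ∈ e)).card ≤ (n-2).choose (r-2) := by
      intro v hv u hu hvu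
      have hsub : (E.filter (fun e => v ∈ e)).filter (fun e => u ∈ e) ⊆
          E.filter (fun e => ({v, u} : Finset α) ⊆ e) := by
        intro e he
        simp only [mem_filter] at he ⊢
        exact ⟨he.1.1, by rw [insert_subset_iff, singleton_subset_iff]; exact ⟨he.1.2, he.2⟩⟩
      have hcard : ({v, u} : Finset α).card = 2 := by
        rw [card_insert_of_notMem (by simpa using hvu), card_singleton]
      have := count_contain V E r hE {v, u}
        (by rw [insert_subset_iff, singleton_subset_iff]; exact ⟨hv, hu⟩)
      rw [hcard] at this
      exact le_trans (Finset.card_le_card hsub) this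
    by_cases hcase : ∃ v ∈ V, D < (E.filter (fun e => v ∈ e)).card
    · -- Case 1: a vertex of large degree
      obtain ⟨v, hvV, hvdeg⟩ := hcase
      set Ev := E.filter (fun e => v ∈ e) with hEv
      set E' := E.filter (fun e => ¬ v ∈ e) with hE'
      -- E' has no matching of size s+1
      have hM' : ∀ M ⊆ E', (∀ e₁ ∈ M, ∀ e₂ ∈ M, e₁ ≠ e₂ → Disjoint e₁ e₂) → M.card ≤ s := by
        intro M hME hMd
        by_contra hcon
        push_neg at hcon
        obtain ⟨M', hM'M, hM'card⟩ := Finset.exists_subset_card_eq hcon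
        have hM'E' : M' ⊆ E' := hM'M.trans hME
        set T := M'.biUnion id with hT
        have hTcard : T.card ≤ r * (s+1) := by
          calc T.card ≤ M'.card * r := by
                apply Finset.card_biUnion_le_card_mul
                intro f hf
                exact le_of_eq (hE f (Finset.mem_filter.mp (hM'E' hf)).1).2
            _ = r * (s+1) := by rw [hM'card, Nat.succ_eq_add_one]; ring
        have hvT : v ∉ T := by
          rw [hT]
          simp only [mem_biUnion, id]
          rintro ⟨f, hf, hvf⟩
          exact (Finset.mem_filter.mp (hM'E' hf)).2 hvf
        -- bad edges: edges through v meeting T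
        have hbad : (Ev.filter (fun e => ¬ Disjoint e T)).card ≤ D := by
          have hsub : Ev.filter (fun e => ¬ Disjoint e T) ⊆
              T.biUnion (fun u => Ev.filter (fun e => u ∈ e)) := by
            intro e he
            rw [mem_filter] at he
            obtain ⟨u, hue, huT⟩ := Finset.not_disjoint_iff.mp he.2
            rw [mem_biUnion]
            exact ⟨u, huT, mem_filter.mpr ⟨he.1, hue⟩⟩
          calc (Ev.filter (fun e => ¬ Disjoint e T)).card
              ≤ (T.biUnion (fun u => Ev.filter (fun e => u ∈ e))).card :=
                Finset.card_le_card hsub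
            _ ≤ T.card * ((n-2).choose (r-2)) := by
                apply Finset.card_biUnion_le_card_mul
                intro u huT
                have huV : u ∈ V := by
                  rw [hT] at huT
                  simp only [mem_biUnion, id] at huT
                  obtain ⟨f, hf, huf⟩ := huT
                  exact (hE f (Finset.mem_filter.mp (hM'E' hf)).1).1 huf
                have hvu : v ≠ u := fun h => hvT (h ▸ huT)
                exact pair_bound v hvV u huV hvu
            _ ≤ (r * (s+1)) * ((n-2).choose (r-2)) :=
                Nat.mul_le_mul_right _ hTcard
            _ = D := by rw [hD]
        -- so there is a good edge through v
        have hgood : (Ev.filter (fun e => Disjoint e T)).Nonempty := by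
          rw [← Finset.card_pos]
          have := Finset.card_filter_add_card_filter_not
            (s := Ev) (p := fun e => Disjoint e T)
          omega
        obtain ⟨e, he⟩ := hgood
        rw [mem_filter] at he
        obtain ⟨heEv, heT⟩ := he
        rw [hEv, mem_filter] at heEv
        obtain ⟨heE, hve⟩ := heEv
        -- e is disjoint from all of M' and not in M'
        have hfT : ∀ f ∈ M', f ⊆ T := fun f hf => Finset.subset_biUnion_of_mem id hf
        have heM' : e ∉ M' := by
          intro h
          exact hvT (hfT e h hve)
        have hbig := hM (insert e M')
          (by
            rw [Finset.insert_subset_iff]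
            exact ⟨heE, fun f hf => (Finset.mem_filter.mp (hM'E' hf)).1⟩)
          (by
            intro e₁ h₁ e₂ h₂ hne
            rw [Finset.mem_insert] at h₁ h₂
            rcases h₁ with h₁ | h₁ <;> rcases h₂ with h₂ | h₂
            · exact absurd (h₁.trans h₂.symm) hne
            · exact h₁ ▸ disjoint_of_subset_right (hfT e₂ h₂) heT
            · exact h₂ ▸ (disjoint_of_subset_right (hfT e₁ h₁) heT).symm
            · exact hMd e₁ (hM'M h₁) e₂ (hM'M h₂) hne)
        rw [Finset.card_insert_of_notMem heM', hM'card] at hbig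
        omega
      -- apply induction hypothesis to V.erase v, E'
      have hEiH : ∀ e ∈ E', e ⊆ V.erase v ∧ e.card = r := by
        intro e he
        rw [hE', mem_filter] at he
        exact ⟨Finset.subset_erase.mpr ⟨(hE e he.1).1, he.2⟩, (hE e he.1).2⟩
      have hsize : c * (s+1) < (V.erase v).card := by
        rw [Finset.card_erase_of_mem hvV, ← hnV]
        have h1 : c * (s+1) + c = c * (s+1+1) := by ring
        have h2 : c * (s+1) + 1 ≤ c * (s+1) + c := Nat.add_le_add_left hc1 _
        have h3 : c * (s+1) + c < n := by rw [h1]; exact hn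
        exact Nat.lt_sub_of_add_lt (lt_of_le_of_lt h2 h3)
      have hIH := ih (V.erase v) E' hEiH hM' hsize
      rw [Finset.card_erase_of_mem hvV, ← hnV] at hIH
      -- degree of v is at most C(n-1, r-1)
      have hEvcard : Ev.card ≤ (n-1).choose (r-1) := by
        have hsub : Ev ⊆ E.filter (fun e => ({v} : Finset α) ⊆ e) := by
          intro e he
          rw [hEv, mem_filter] at he
          rw [mem_filter, singleton_subset_iff]
          exact he
        have := count_contain V E r hE {v} (singleton_subset_iff.mpr hvV)
        rw [card_singleton] at this
        exact le_trans (Finset.card_le_card hsub) this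
      -- combine
      have hsplit : Ev.card + E'.card = E.card := by
        rw [hEv, hE']
        exact Finset.card_filter_add_card_filter_not (fun e => v ∈ e)
      have hpascal : n.choose r = (n-1).choose (r-1) + (n-1).choose r := by
        have h1 : n = (n-1) + 1 := by omega
        have h2 : r = (r-1) + 1 := by omega
        rw [h1, h2, Nat.choose_succ_succ']
        congr 2
      have hmono : (n - (s+1)).choose r ≤ (n-1).choose r :=
        Nat.choose_le_choose r (by omega)
      have h1s : n - 1 - s = n - (s+1) := by omega
      rw [h1s] at hIH
      omega
    · -- Case 2: all degrees small
      push_neg at hcase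
      -- take a maximum matching
      set S := E.powerset.filter
        (fun M => ∀ e₁ ∈ M, ∀ e₂ ∈ M, e₁ ≠ e₂ → Disjoint e₁ e₂) with hS
      have hSne : S.Nonempty := ⟨∅, by simp [hS]⟩
      obtain ⟨M, hMS, hMmax⟩ := Finset.exists_max_image S Finset.card hSne
      rw [hS, mem_filter, Finset.mem_powerset] at hMS
      obtain ⟨hME, hMd⟩ := hMS
      set T := M.biUnion id with hT
      have hMcard : M.card ≤ s + 1 := hM M hME hMd
      have hTcard : T.card ≤ r * (s+1) := by
        calc T.card ≤ M.card * r := by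
              apply Finset.card_biUnion_le_card_mul
              intro f hf
              exact le_of_eq (hE f (hME hf)).2
          _ ≤ (s+1) * r := Nat.mul_le_mul_right r hMcard
          _ = r * (s+1) := by ring
      -- every edge meets T
      have hmeet : ∀ e ∈ E, ¬ Disjoint e T := by
        intro e heE hdisj
        have heM : e ∉ M := by
          intro h
          have hsub : e ⊆ T := Finset.subset_biUnion_of_mem id h
          have hene : e.Nonempty := by
            rw [← Finset.card_pos, (hE e heE).2]; omega
          obtain ⟨x, hx⟩ := hene
          exact (Finset.disjoint_left.mp hdisj hx) (hsub hx)
        have hins : insert e M ∈ S := by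
          rw [hS, mem_filter, Finset.mem_powerset]
          constructor
          · rw [Finset.insert_subset_iff]; exact ⟨heE, hME⟩
          · intro e₁ h₁ e₂ h₂ hne
            rw [Finset.mem_insert] at h₁ h₂
            rcases h₁ with h₁ | h₁ <;> rcases h₂ with h₂ | h₂
            · exact absurd (h₁.trans h₂.symm) hne
            · exact h₁ ▸ disjoint_of_subset_right
                (Finset.subset_biUnion_of_mem id h₂) hdisj
            · exact h₂ ▸ (disjoint_of_subset_right
                (Finset.subset_biUnion_of_mem id h₁) hdisj).symm
            · exact hMd e₁ h₁ e₂ h₂ hne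
        have := hMmax _ hins
        rw [Finset.card_insert_of_notMem heM] at this
        omega
      -- count
      have hEbound : E.card ≤ (r * (s+1)) * D := by
        have hsub : E ⊆ T.biUnion (fun u => E.filter (fun e => u ∈ e)) := by
          intro e heE
          obtain ⟨u, hue, huT⟩ := Finset.not_disjoint_iff.mp (hmeet e heE)
          rw [mem_biUnion]
          exact ⟨u, huT, mem_filter.mpr ⟨heE, hue⟩⟩
        calc E.card ≤ (T.biUnion (fun u => E.filter (fun e => u ∈ e))).card :=
              Finset.card_le_card hsub
          _ ≤ T.card * D := by
              apply Finset.card_biUnion_le_card_mul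
              intro u huT
              have huV : u ∈ V := by
                rw [hT] at huT
                simp only [mem_biUnion, id] at huT
                obtain ⟨f, hf, huf⟩ := huT
                exact (hE f (hME hf)).1 huf
              exact hcase u huV
          _ ≤ (r * (s+1)) * D := Nat.mul_le_mul_right D hTcard
      have hnum := numeric r (s+1) n hr (by omega) (by rw [← hc]; exact hn)
      calc E.card ≤ (r * (s+1)) * D := hEbound
        _ = r^2 * (s+1)^2 * ((n-2).choose (r-2)) := by rw [hD]; ring
        _ ≤ n.choose r - (n - (s+1)).choose r := hnum

/-- Erdős. For every `r ≥ 2` there is a constant `c_r` such that for all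
`a ≥ 1` and `n > c_r · a`, every `r`-uniform hypergraph on `n` vertices with matching number
less than `a` has at most `C(n,r) - C(n-(a-1), r)` edges. -/
theorem stmt_7 (r : ℕ) (hr : 2 ≤ r) :
    ∃ c : ℕ, ∀ a n : ℕ, 1 ≤ a → c * a < n →
      ∀ E : Finset (Finset (Fin n)),
        (∀ e ∈ E, e.card = r) →
        (∀ M ⊆ E, (∀ e₁ ∈ M, ∀ e₂ ∈ M, e₁ ≠ e₂ → Disjoint e₁ e₂) → M.card < a) →
        E.card ≤ n.choose r - (n - (a - 1)).choose r := by
  refine ⟨2^r * r^3, fun a n ha hn E hEcard hEmatch => ?_⟩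
  have key := key_lemma r hr (a-1) (Finset.univ : Finset (Fin n)) E
    (fun e he => ⟨Finset.subset_univ e, hEcard e he⟩)
    (fun M hME hMd => by have := hEmatch M hME hMd; omega)
  rw [Finset.card_univ, Fintype.card_fin, show a - 1 + 1 = a by omega] at key
  exact key hn
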